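/- Let s ∈ (0,1). For every x > 0, Re[ (i/π) ∫_{0}^{∞} exp(−x r − e^{iπs} r^s) dr ] = (1/π) Σ_{j=1}^{∞} (−1)^{j−1} (Γ(sj+1) sin(πsj)/j!) · x^{−(sj+1)}, where the series on the right converges absolutely. -/

import Mathlib

open MeasureTheory Real Set Filter

lemma my_Gamma_add_le {t a : ℝ} (ht : 0 < t) (ha0 : 0 ≤ a) (ha1 : a ≤ 1) :
    Real.Gamma (t + a) ≤ t ^ a * Real.Gamma t := by
  have hGt : 0 < Real.Gamma t := Real.Gamma_pos_of_pos ht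
  have key := Real.convexOn_log_Gamma.2 (Set.mem_Ioi.2 (by linarith : (0:ℝ) < t + 1))
    (Set.mem_Ioi.2 ht) ha0 (by linarith : (0:ℝ) ≤ 1 - a) (by ring)
  have hco : a • (t+1) + (1-a) • t = t + a := by simp [smul_eq_mul]; ring
  rw [hco] at key
  simp only [Function.comp_apply, smul_eq_mul] at key
  rw [Real.Gamma_add_one ht.ne', Real.log_mul ht.ne' hGt.ne'] at key
  have h1 : Real.log (Real.Gamma (t+a)) ≤ Real.log (t ^ a * Real.Gamma t) := by
    rw [Real.log_mul (by positivity) hGt.ne', Real.log_rpow ht]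
    nlinarith [key]
  exact (Real.log_le_log_iff (Real.Gamma_pos_of_pos (by linarith)) (by positivity)).1 h1

lemma my_summable (s x : ℝ) (hs0 : 0 < s) (hs1 : s < 1) (hx : 0 < x) :
    Summable (fun n : ℕ => Real.Gamma (s*n+1) * x ^ (-(s*n+1)) / (n.factorial : ℝ)) := by
  set b : ℕ → ℝ := fun n => Real.Gamma (s*n+1) * x ^ (-(s*n+1)) / (n.factorial : ℝ) with hb
  have hbpos : ∀ n, 0 < b n := by
    intro n
    have : (0:ℝ) < s*n+1 := by positivity
    have := Real.Gamma_pos_of_pos this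
    positivity
  apply summable_of_ratio_norm_eventually_le (r := 1/2) (by norm_num)
  have htend : Tendsto (fun n : ℕ => ((n:ℝ)+1) ^ (s-1) * x ^ (-s)) atTop (nhds 0) := by
    have h1 : Tendsto (fun y : ℝ => y ^ (-(1-s))) atTop (nhds 0) :=
      tendsto_rpow_neg_atTop (by linarith)
    have h2 : Tendsto (fun n : ℕ => (n:ℝ)+1) atTop atTop :=
      tendsto_atTop_add_const_right _ _ tendsto_natCast_atTop_atTop
    have := (h1.comp h2).mul_const (x ^ (-s))
    simpa [neg_sub, zero_mul] using this
  have hev : ∀ᶠ n : ℕ in atTop, ((n:ℝ)+1) ^ (s-1) * x ^ (-s) ≤ 1/2 := by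
    filter_upwards [htend.eventually_lt_const (by norm_num : (0:ℝ) < 1/2)] with n h
    exact le_of_lt h
  filter_upwards [hev] with n h
  have hratio : b (n+1) ≤ (((n:ℝ)+1) ^ (s-1) * x ^ (-s)) * b n := by
    have hG : Real.Gamma (s*(n+1)+1) ≤ ((n:ℝ)+1) ^ s * Real.Gamma (s*n+1) := by
      have e1 : s*((n:ℝ)+1)+1 = (s*n+1) + s := by ring
      have h2 : Real.Gamma ((s*n+1) + s) ≤ (s*n+1) ^ s * Real.Gamma (s*n+1) :=
        my_Gamma_add_le (by positivity) hs0.le hs1.le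
      have h3 : (s*(n:ℝ)+1) ^ s ≤ ((n:ℝ)+1) ^ s := by
        apply Real.rpow_le_rpow (by positivity) _ hs0.le
        nlinarith [Nat.cast_nonneg (α := ℝ) n]
      calc Real.Gamma (s*((n:ℝ)+1)+1) = Real.Gamma ((s*n+1) + s) := by ring_nf
        _ ≤ (s*n+1) ^ s * Real.Gamma (s*n+1) := h2
        _ ≤ ((n:ℝ)+1) ^ s * Real.Gamma (s*n+1) := by
            have := Real.Gamma_pos_of_pos (show (0:ℝ) < s*n+1 by positivity)
            nlinarith
    have hxpow : x ^ (-(s*((n:ℕ)+1:ℝ)+1)) = x ^ (-s) * x ^ (-(s*n+1)) := by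
      rw [← Real.rpow_add hx]; ring_nf
    have hfact : ((n+1).factorial : ℝ) = ((n:ℝ)+1) * (n.factorial : ℝ) := by
      rw [Nat.factorial_succ]; push_cast; ring
    have hGpos := Real.Gamma_pos_of_pos (show (0:ℝ) < s*n+1 by positivity)
    have hxp : (0:ℝ) < x ^ (-(s*n+1)) := Real.rpow_pos_of_pos hx _
    have hfp : (0:ℝ) < (n.factorial : ℝ) := by positivity
    have hnp : (0:ℝ) < (n:ℝ)+1 := by positivity
    have hrw : ((n:ℝ)+1) ^ (s-1) = ((n:ℝ)+1) ^ s / ((n:ℝ)+1) := by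
      rw [eq_div_iff hnp.ne', ← Real.rpow_add_one hnp.ne']; ring_nf
    simp only [hb]
    push_cast
    rw [hxpow, hfact, hrw]
    rw [div_le_iff₀ (by positivity)]
    have := mul_le_mul_of_nonneg_right hG (le_of_lt (mul_pos (Real.rpow_pos_of_pos hx (-s)) hxp))
    calc Real.Gamma (s*((n:ℝ)+1)+1) * (x ^ (-s) * x ^ (-(s*((n:ℝ))+1)))
        ≤ (((n:ℝ)+1) ^ s * Real.Gamma (s*(n:ℝ)+1)) * (x ^ (-s) * x ^ (-(s*(n:ℝ)+1))) := by
          push_cast at hG ⊢; nlinarith [Real.rpow_pos_of_pos hx (-s)]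
      _ = ((n:ℝ)+1) ^ s / ((n:ℝ)+1) * x ^ (-s) * (Real.Gamma (s*(n:ℝ)+1) * x ^ (-(s*(n:ℝ)+1)) / (n.factorial:ℝ)) * (((n:ℝ)+1) * (n.factorial:ℝ)) := by
          field_simp
  calc ‖b (n+1)‖ = b (n+1) := Real.norm_of_nonneg (hbpos _).le
    _ ≤ (((n:ℝ)+1) ^ (s-1) * x ^ (-s)) * b n := hratio
    _ ≤ (1/2) * b n := by nlinarith [hbpos n]
    _ = (1/2) * ‖b n‖ := by rw [Real.norm_of_nonneg (hbpos n).le]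

theorem stmt_12 (s : ℝ) (hs0 : 0 < s) (hs1 : s < 1) (x : ℝ) (hx : 0 < x) :
    Summable (fun j : ℕ =>
      |(-1 : ℝ) ^ j * (Real.Gamma (s * ((j : ℝ) + 1) + 1) *
          Real.sin (Real.pi * s * ((j : ℝ) + 1)) / (Nat.factorial (j + 1) : ℝ)) *
        x ^ (-(s * ((j : ℝ) + 1) + 1))|) ∧
    (Complex.I / (Real.pi : ℂ) *
        ∫ r in Set.Ioi (0 : ℝ),
          Complex.exp (-((x * r : ℝ) : ℂ) -
            Complex.exp (Complex.I * (Real.pi : ℂ) * (s : ℂ)) * ((r ^ s : ℝ) : ℂ))).re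
      = (1 / Real.pi) *
        ∑' j : ℕ, (-1 : ℝ) ^ j * (Real.Gamma (s * ((j : ℝ) + 1) + 1) *
            Real.sin (Real.pi * s * ((j : ℝ) + 1)) / (Nat.factorial (j + 1) : ℝ)) *
          x ^ (-(s * ((j : ℝ) + 1) + 1)) := by
  have hb := my_summable s x hs0 hs1 hx
  set b : ℕ → ℝ := fun n => Real.Gamma (s*n+1) * x ^ (-(s*n+1)) / (n.factorial : ℝ) with hbdef
  have hbnonneg : ∀ n, 0 ≤ b n := by
    intro n
    have := Real.Gamma_pos_of_pos (show (0:ℝ) < s*n+1 by positivity)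
    have := Real.rpow_pos_of_pos hx (-(s*n+1))
    positivity
  -- First conjunct: absolute summability
  have habs : Summable (fun j : ℕ =>
      |(-1 : ℝ) ^ j * (Real.Gamma (s * ((j : ℝ) + 1) + 1) *
          Real.sin (Real.pi * s * ((j : ℝ) + 1)) / (Nat.factorial (j + 1) : ℝ)) *
        x ^ (-(s * ((j : ℝ) + 1) + 1))|) := by
    have hb1 : Summable (fun j : ℕ => b (j+1)) := (summable_nat_add_iff 1).2 hb
    refine Summable.of_nonneg_of_le (fun j => abs_nonneg _) (fun j => ?_) hb1
    have hGpos := Real.Gamma_pos_of_pos (show (0:ℝ) < s*((j:ℝ)+1)+1 by positivity)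
    have hxp := Real.rpow_pos_of_pos hx (-(s*((j:ℝ)+1)+1))
    have hfp : (0:ℝ) < ((j+1).factorial : ℝ) := by positivity
    have hsin : |Real.sin (Real.pi*s*((j:ℝ)+1))| ≤ 1 :=
      abs_le.2 ⟨Real.neg_one_le_sin _, Real.sin_le_one _⟩
    have hbeq : b (j+1) = Real.Gamma (s*((j:ℝ)+1)+1) * x^(-(s*((j:ℝ)+1)+1)) /
        (((j+1).factorial : ℕ) : ℝ) := by
      simp only [hbdef]; push_cast; ring_nf
    rw [hbeq, abs_mul, abs_mul, abs_pow, abs_neg, abs_one, one_pow, one_mul,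
      abs_of_pos hxp, abs_div, abs_of_pos hfp, abs_mul, abs_of_pos hGpos]
    calc Real.Gamma (s*((j:ℝ)+1)+1) * |Real.sin (Real.pi*s*((j:ℝ)+1))| /
          (((j+1).factorial : ℕ) : ℝ) * x^(-(s*((j:ℝ)+1)+1))
        ≤ Real.Gamma (s*((j:ℝ)+1)+1) * 1 / (((j+1).factorial : ℕ) : ℝ) *
          x^(-(s*((j:ℝ)+1)+1)) := by gcongr
      _ = Real.Gamma (s*((j:ℝ)+1)+1) * x^(-(s*((j:ℝ)+1)+1)) /
          (((j+1).factorial : ℕ) : ℝ) := by ring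
  refine ⟨habs, ?_⟩
  set c : ℂ := Complex.exp (Complex.I * (Real.pi : ℂ) * (s : ℂ)) with hcdef
  set F : ℕ → ℝ → ℂ := fun n r =>
    ((-c)^n / (n.factorial : ℂ)) * ((r ^ (s*n) * Real.exp (-(x*r)) : ℝ) : ℂ) with hFdef
  set G : ℕ → ℝ := fun n => x ^ (-(s*(n:ℝ)+1)) * Real.Gamma (s*n+1) with hGdef
  -- real integrability
  have hgint : ∀ n : ℕ, IntegrableOn (fun r : ℝ => r ^ (s*(n:ℝ)) * Real.exp (-(x*r)))
      (Set.Ioi 0) := by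
    intro n
    have h := integrableOn_rpow_mul_exp_neg_mul_rpow
      (show (-1:ℝ) < s*n by nlinarith [mul_nonneg hs0.le (Nat.cast_nonneg (α := ℝ) n)]) one_pos hx
    simpa [Real.rpow_one, neg_mul] using h
  -- value of real integral
  have hgval : ∀ n : ℕ, (∫ r in Set.Ioi (0:ℝ), r ^ (s*(n:ℝ)) * Real.exp (-(x*r))) = G n := by
    intro n
    have h := Real.integral_rpow_mul_exp_neg_mul_Ioi
      (show (0:ℝ) < s*n+1 by positivity) hx
    rw [show s*(n:ℝ)+1-1 = s*n by ring] at h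
    rw [h, hGdef, one_div, Real.inv_rpow hx.le, ← Real.rpow_neg hx.le]
  -- norm of c
  have hnormc : ‖c‖ = 1 := by
    rw [hcdef, Complex.norm_exp]
    simp
  -- integrability of F n
  have hFint : ∀ n : ℕ, Integrable (F n) (volume.restrict (Set.Ioi (0:ℝ))) := by
    intro n
    exact ((hgint n).ofReal).const_mul _
  -- value of norm integrals
  have hFnorm : ∀ n : ℕ, (∫ r in Set.Ioi (0:ℝ), ‖F n r‖) = b n := by
    intro n
    have h1 : ∀ r ∈ Set.Ioi (0:ℝ), ‖F n r‖ =
        (1 / (n.factorial : ℝ)) * (r ^ (s*(n:ℝ)) * Real.exp (-(x*r))) := by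
      intro r hr
      have hr0 : (0:ℝ) < r := hr
      have hnn : 0 ≤ r ^ (s*(n:ℝ)) * Real.exp (-(x*r)) := by positivity
      rw [hFdef]
      simp only [norm_mul, norm_div, norm_pow, norm_neg, hnormc, one_pow,
        Complex.norm_real, Complex.norm_natCast]
      rw [Real.norm_of_nonneg (by positivity : (0:ℝ) ≤ r ^ (s*(n:ℝ))),
        Real.norm_of_nonneg (Real.exp_nonneg _)]
    rw [setIntegral_congr_fun measurableSet_Ioi h1, integral_const_mul, hgval n]
    rw [hbdef, hGdef]
    ring
  -- summability of norm integrals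
  have hFnormsum : Summable (fun n : ℕ => ∫ r in Set.Ioi (0:ℝ), ‖F n r‖) := by
    simpa only [hFnorm] using hb
  -- swap sum and integral
  have hswap : ∑' n : ℕ, (∫ r in Set.Ioi (0:ℝ), F n r) = ∫ r in Set.Ioi (0:ℝ), ∑' n, F n r :=
    integral_tsum_of_summable_integral_norm hFint hFnormsum
  -- pointwise expansion
  have hpt : ∀ r ∈ Set.Ioi (0:ℝ),
      Complex.exp (-((x * r : ℝ) : ℂ) - c * ((r ^ s : ℝ) : ℂ)) = ∑' n : ℕ, F n r := by
    intro r hr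
    have hr0 : (0:ℝ) < r := hr
    rw [sub_eq_add_neg, Complex.exp_add]
    have hexp : Complex.exp (-(c * ((r ^ s : ℝ) : ℂ)))
        = ∑' n : ℕ, (-(c * ((r ^ s : ℝ) : ℂ)))^n / (n.factorial : ℂ) := by
      rw [Complex.exp_eq_exp_ℂ, NormedSpace.exp_eq_tsum_div]
    rw [hexp, ← tsum_mul_left]
    refine tsum_congr fun n => ?_
    simp only [hFdef]
    have h2 : ((r ^ (s*(n:ℝ)) : ℝ) : ℂ) = (((r ^ s : ℝ) : ℂ))^n := by
      rw [← Complex.ofReal_pow]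
      congr 1
      rw [← Real.rpow_natCast (r ^ s) n, ← Real.rpow_mul hr0.le]
    have h3 : Complex.exp (-((x * r : ℝ) : ℂ)) = ((Real.exp (-(x*r)) : ℝ) : ℂ) := by
      rw [Complex.ofReal_exp, Complex.ofReal_neg]
    rw [h3, Complex.ofReal_mul, h2, neg_pow (c * _), mul_pow]
    ring
  -- value of complex integrals
  have hFval : ∀ n : ℕ, (∫ r in Set.Ioi (0:ℝ), F n r)
      = ((-c)^n / (n.factorial : ℂ)) * ((G n : ℝ) : ℂ) := by
    intro n
    rw [hFdef]
    simp only
    rw [integral_const_mul]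
    congr 1
    rw [← hgval n]
    exact integral_ofReal
  -- rewrite the integral
  rw [setIntegral_congr_fun measurableSet_Ioi hpt, ← hswap]
  have htsum_eq : ∑' n : ℕ, (∫ r in Set.Ioi (0:ℝ), F n r)
      = ∑' n : ℕ, ((-c)^n / (n.factorial : ℂ)) * ((G n : ℝ) : ℂ) := tsum_congr hFval
  rw [htsum_eq]
  set d : ℕ → ℂ := fun n => ((-c)^n / (n.factorial : ℂ)) * ((G n : ℝ) : ℂ) with hddef
  have hdsum : Summable d := by
    refine Summable.of_norm ?_
    have : ∀ n, ‖d n‖ = b n := by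
      intro n
      rw [hddef]
      simp only [norm_mul, norm_div, norm_pow, norm_neg, hnormc, one_pow,
        Complex.norm_real, Complex.norm_natCast]
      rw [Real.norm_of_nonneg (by
        have := Real.Gamma_pos_of_pos (show (0:ℝ) < s*n+1 by positivity)
        have := Real.rpow_pos_of_pos hx (-(s*(n:ℝ)+1))
        rw [hGdef]; positivity), hbdef, hGdef]
      ring
    simpa only [this] using hb
  rw [tsum_mul_left.symm, Complex.re_tsum (hdsum.mul_left _)]
  -- compute each real part
  have hIc : ∀ θ : ℝ, Complex.I * Complex.exp ((θ:ℂ) * Complex.I)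
      = ((-Real.sin θ : ℝ) : ℂ) + ((Real.cos θ : ℝ) : ℂ) * Complex.I := by
    intro θ
    rw [Complex.exp_mul_I, Complex.ofReal_neg, Complex.ofReal_cos, Complex.ofReal_sin]
    linear_combination (Complex.sin (θ:ℂ)) * Complex.I_sq
  have hd_re : ∀ n : ℕ, (Complex.I / (Real.pi : ℂ) * d n).re
      = 1/Real.pi * ((-1:ℝ)^(n+1) * Real.sin (Real.pi*s*(n:ℝ)) * b n) := by
    intro n
    have hθ : (-c)^n = ((((-1:ℝ)^n : ℝ)) : ℂ) * Complex.exp (((Real.pi*s*(n:ℝ) : ℝ):ℂ) * Complex.I) := by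
      rw [neg_pow, hcdef, ← Complex.exp_nat_mul]
      push_cast
      ring_nf
    have key : Complex.I / (Real.pi : ℂ) * d n
        = (((1/Real.pi * ((-1:ℝ)^n * (G n / (n.factorial : ℝ))) : ℝ)) : ℂ) *
          (Complex.I * Complex.exp (((Real.pi*s*(n:ℝ) : ℝ):ℂ) * Complex.I)) := by
      rw [hddef]
      simp only [hθ]
      have hπ : ((Real.pi : ℝ) : ℂ) ≠ 0 := by
        exact_mod_cast Complex.ofReal_ne_zero.2 Real.pi_ne_zero
      have hfn : ((n.factorial : ℝ) : ℂ) ≠ 0 := by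
        exact_mod_cast Nat.cast_ne_zero.2 n.factorial_ne_zero
      push_cast
      field_simp
    rw [key, hIc]
    rw [show (((1/Real.pi * ((-1:ℝ)^n * (G n / (n.factorial : ℝ))) : ℝ)) : ℂ) *
        (((-Real.sin (Real.pi*s*(n:ℝ)) : ℝ) : ℂ) + ((Real.cos (Real.pi*s*(n:ℝ)) : ℝ) : ℂ) * Complex.I)
        = (((1/Real.pi * ((-1:ℝ)^n * (G n / (n.factorial : ℝ))) * (-Real.sin (Real.pi*s*(n:ℝ))) : ℝ)) : ℂ)
          + (((1/Real.pi * ((-1:ℝ)^n * (G n / (n.factorial : ℝ))) * Real.cos (Real.pi*s*(n:ℝ)) : ℝ)) : ℂ) * Complex.I by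
      push_cast; ring]
    rw [Complex.add_re, Complex.ofReal_re, Complex.mul_I_re, Complex.ofReal_im]
    rw [hbdef, hGdef]
    ring
  rw [tsum_congr hd_re]
  -- reindex
  set e : ℕ → ℝ := fun n => 1/Real.pi * ((-1:ℝ)^(n+1) * Real.sin (Real.pi*s*(n:ℝ)) * b n)
    with hedef
  have hesum : Summable e := by
    refine Summable.of_norm ?_
    refine Summable.of_nonneg_of_le (fun n => norm_nonneg _) (fun n => ?_)
      (hb.mul_left (1/Real.pi))
    rw [hedef]
    simp only [norm_mul, norm_pow, norm_neg, norm_one, one_pow, Real.norm_eq_abs]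
    rw [abs_of_nonneg (hbnonneg n), abs_of_nonneg (by positivity : (0:ℝ) ≤ 1/Real.pi)]
    have hsin : |Real.sin (Real.pi*s*(n:ℝ))| ≤ 1 :=
      abs_le.2 ⟨Real.neg_one_le_sin _, Real.sin_le_one _⟩
    have h1 := mul_le_mul_of_nonneg_right hsin (hbnonneg n)
    have h2 : (0:ℝ) ≤ 1/Real.pi := by positivity
    nlinarith [h1, h2, hbnonneg n]
  rw [hesum.tsum_eq_zero_add]
  have he0 : e 0 = 0 := by
    rw [hedef]
    norm_num
  rw [he0, zero_add]
  rw [← tsum_mul_left]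
  refine tsum_congr fun j => ?_
  rw [hedef, hbdef]
  have : Real.pi*s*((j:ℝ)+1) = Real.pi*s*(((j+1:ℕ)):ℝ) := by push_cast; ring
  push_cast
  ring_nf
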